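/- Let p ≥ 1, ℓ ≥ 0, b₀ ≥ 1, w₀ ≥ 0 be integers and s₀ = b₀ + w₀. Define the weighted history counts h_{n,b} by h_{0,b} = 1 if b = b₀ and 0 otherwise, and h_{n+1,b} = (b−1)·h_{n,b−1} + (s₀ + n + ℓ⌊n/p⌋ − b)·h_{n,b}, and for r ≥ 0 set h_n^{(r)} = Σ_b b(b−1)⋯(b−r+1)·h_{n,b} (with h_n^{(0)} = Σ_b h_{n,b}). Then for every n ≥ 0 and every r ≥ 1: h_{n+1}^{(r)} = (s₀ + n + ℓ⌊n/p⌋ + r)·h_n^{(r)} + r(r−1)·h_n^{(r−1)}. -/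

import Mathlib

open Real

/-- `histMass p ℓ b₀ w₀ n b` is the number of histories of the Young–Pólya urn of
period `p` and parameter `ℓ` which after `n` steps contain `b` black balls (among
`b₀ + w₀ + n + ℓ⌊n/p⌋` balls in total):
`h_{0,b} = [b = b₀]` and `h_{n+1,b} = (b-1) h_{n,b-1} + (s₀ + n + ℓ⌊n/p⌋ - b) h_{n,b}`. -/
noncomputable def histMass (p ℓ b₀ w₀ : ℕ) : ℕ → ℕ → ℝ
  | 0, b => if b = b₀ then 1 else 0
  | n + 1, b =>
    ((b - 1 : ℕ) : ℝ) * histMass p ℓ b₀ w₀ n (b - 1) +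
      (((b₀ + w₀ + n + ℓ * (n / p) : ℕ) : ℝ) - (b : ℝ)) * histMass p ℓ b₀ w₀ n b

lemma hist_supp (p ℓ b₀ w₀ : ℕ) : ∀ n b, b₀ + n < b → histMass p ℓ b₀ w₀ n b = 0 := by
  intro n
  induction n with
  | zero => intro b hb; simp [histMass]; omega
  | succ m ih =>
      intro b hb
      have h1 : histMass p ℓ b₀ w₀ m (b - 1) = 0 := ih _ (by omega)
      have h2 : histMass p ℓ b₀ w₀ m b = 0 := ih _ (by omega)
      simp [histMass, h1, h2]

lemma poly_id (r : ℕ) (hr : 1 ≤ r) (x : ℝ) :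
    x * ∏ t ∈ Finset.range r, (x + 1 - (t : ℝ)) =
      (x + (r : ℝ)) * ∏ t ∈ Finset.range r, (x - (t : ℝ)) +
        (r : ℝ) * ((r : ℝ) - 1) * ∏ t ∈ Finset.range (r - 1), (x - (t : ℝ)) := by
  obtain ⟨m, rfl⟩ : ∃ m, r = m + 1 := ⟨r - 1, (Nat.succ_pred_eq_of_pos hr).symm⟩
  induction m with
  | zero => simp; ring
  | succ k ih =>
      have IH := ih (by omega)
      simp only [Nat.add_sub_cancel, Finset.prod_range_succ] at IH ⊢
      push_cast at IH ⊢
      linear_combination (x - (k : ℝ)) * IH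

/-- **Theorem (recurrence for the factorial moment numerators).**
With `s₀ = b₀ + w₀` and `h_n^{(r)} = Σ_b b(b-1)⋯(b-r+1) h_{n,b}`, one has, for every
`n ≥ 0` and `r ≥ 1`,
`h_{n+1}^{(r)} = (s₀ + n + ℓ⌊n/p⌋ + r) h_n^{(r)} + r(r-1) h_n^{(r-1)}`. -/
theorem young_polya_urn_moment_recurrence
    (p ℓ b₀ w₀ : ℕ) (hp : 1 ≤ p) (hb : 1 ≤ b₀) (n r : ℕ) (hr : 1 ≤ r) :
    (∑' b : ℕ, (∏ t ∈ Finset.range r, ((b : ℝ) - (t : ℝ))) * histMass p ℓ b₀ w₀ (n + 1) b) =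
      (((b₀ + w₀ + n + ℓ * (n / p) : ℕ) : ℝ) + (r : ℝ)) *
          (∑' b : ℕ, (∏ t ∈ Finset.range r, ((b : ℝ) - (t : ℝ))) * histMass p ℓ b₀ w₀ n b) +
        (r : ℝ) * ((r : ℝ) - 1) *
          (∑' b : ℕ, (∏ t ∈ Finset.range (r - 1), ((b : ℝ) - (t : ℝ))) * histMass p ℓ b₀ w₀ n b) := by
  have hz := hist_supp p ℓ b₀ w₀
  rw [tsum_eq_sum (s := Finset.range (b₀ + n + 2))
        (fun b hb => by rw [hz (n+1) b (by simp at hb; omega)]; ring),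
      tsum_eq_sum (s := Finset.range (b₀ + n + 2))
        (fun b hb => by rw [hz n b (by simp at hb; omega)]; ring),
      tsum_eq_sum (s := Finset.range (b₀ + n + 2))
        (fun b hb => by rw [hz n b (by simp at hb; omega)]; ring)]
  simp only [histMass, mul_add, Finset.sum_add_distrib]
  rw [Finset.sum_range_succ' (fun b => (∏ t ∈ Finset.range r, ((b : ℝ) - (t : ℝ))) *
        (((b - 1 : ℕ) : ℝ) * histMass p ℓ b₀ w₀ n (b - 1))) (b₀ + n + 1)]
  rw [Finset.sum_range_succ (fun b => (∏ t ∈ Finset.range r, ((b : ℝ) - (t : ℝ))) *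
        ((((b₀ + w₀ + n + ℓ * (n / p) : ℕ) : ℝ) - (b : ℝ)) * histMass p ℓ b₀ w₀ n b)),
      Finset.sum_range_succ
        (fun b => (∏ t ∈ Finset.range r, ((b : ℝ) - (t : ℝ))) * histMass p ℓ b₀ w₀ n b),
      Finset.sum_range_succ
        (fun b => (∏ t ∈ Finset.range (r-1), ((b : ℝ) - (t : ℝ))) * histMass p ℓ b₀ w₀ n b)]
  rw [hz n (b₀ + n + 1) (by omega)]
  simp only [Nat.add_sub_cancel, Nat.zero_sub, Nat.cast_zero, zero_mul, mul_zero, add_zero]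
  rw [Finset.mul_sum, Finset.mul_sum, ← Finset.sum_add_distrib, ← Finset.sum_add_distrib]
  refine Finset.sum_congr rfl fun c _ => ?_
  have key := poly_id r hr (c : ℝ)
  push_cast
  linear_combination (histMass p ℓ b₀ w₀ n c) * key
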